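/- Let ω and φ be real quaternions satisfying φ² = −1, (ωφ)² = −1, and ω + ω² = −1, and let g = [[ω,0],[0,1]] and h = [[φ,0],[0,φ]] in M₂(ℍ). Then the ℝ-subalgebra of M₂(ℍ) generated by g and h is six-dimensional over ℝ and is isomorphic as an ℝ-algebra to the product ℂ × ℍ. -/

import Mathlib

open Quaternion

lemma diag_eq_matrix (a b : ℍ[ℝ]) :
    Matrix.diagonal ![a, b] = !![a, 0; 0, b] := by
  apply Matrix.ext
  intro i j
  fin_cases i <;> fin_cases j <;> simp [Matrix.diagonal]

set_option maxHeartbeats 1000000 in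
/-- Let `ω, φ` be quaternions with `φ² = −1`, `(ωφ)² = −1`, `ω + ω² = −1`, and let
`g = [[ω,0],[0,1]]` and `h = [[φ,0],[0,φ]]` in `M₂(ℍ)`.  Then the `ℝ`-subalgebra of
`M₂(ℍ)` generated by `g` and `h` is 6-dimensional over `ℝ` and is isomorphic as an
`ℝ`-algebra to `ℂ × ℍ`. -/
theorem neutrino_spin_algebra_iso_C_prod_H (ω φ : ℍ[ℝ])
    (hφ : φ ^ 2 = -1) (hωφ : (ω * φ) ^ 2 = -1) (hω : ω + ω ^ 2 = -1)
    (g h : Matrix (Fin 2) (Fin 2) ℍ[ℝ])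
    (hg : g = !![ω, 0; 0, 1]) (hh : h = !![φ, 0; 0, φ]) :
    Module.finrank ℝ
        ↥(Algebra.adjoin ℝ ({g, h} : Set (Matrix (Fin 2) (Fin 2) ℍ[ℝ]))) = 6 ∧
    Nonempty ((Algebra.adjoin ℝ ({g, h} : Set (Matrix (Fin 2) (Fin 2) ℍ[ℝ]))) ≃ₐ[ℝ]
      (ℂ × ℍ[ℝ])) := by
  -- basic quaternion identities
  have hφ' : φ * φ = -1 := by rw [← sq]; exact hφ
  have hω2 : ω * ω = -1 - ω := by
    rw [sq] at hω
    rw [eq_sub_iff_add_eq, add_comm]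
    exact hω
  have hω3 : ω * (ω * ω) = 1 := by
    rw [hω2, mul_sub, mul_neg_one, hω2]
    noncomm_ring
  -- φ ω = ω² φ
  have hφω : φ * ω = ω * ω * φ := by
    have e1 : ω * φ * ω * φ = -1 := by rw [← hωφ, sq]; noncomm_ring
    have e2 : ω * φ * ω = φ := by
      have e3 := congrArg (· * φ) e1
      simp only [mul_assoc (ω * φ * ω) φ φ] at e3
      rw [hφ', mul_neg_one, neg_one_mul, neg_inj] at e3
      exact e3
    calc φ * ω = (ω * (ω * ω)) * (φ * ω) := by rw [hω3, one_mul]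
      _ = ω * ω * (ω * φ * ω) := by noncomm_ring
      _ = ω * ω * φ := by rw [e2]
  set u : ℍ[ℝ] := 1 + 2 * ω with hu
  have hu2 : u * u = -3 := by
    have e : u * u = 1 + 4 * ω + 4 * (ω * ω) := by rw [hu]; noncomm_ring
    rw [e, hω2]; noncomm_ring; simp
  have hanti : φ * u = -(u * φ) := by
    have e : φ * u = φ + 2 * (φ * ω) := by rw [hu]; noncomm_ring
    rw [e, hφω, hω2, hu]; noncomm_ring
  set s : ℝ := Real.sqrt 3 with hs
  set i' : ℍ[ℝ] := s⁻¹ • u with hi'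
  have hs3 : s * s = 3 := Real.mul_self_sqrt (by norm_num)
  have hi2 : i' * i' = -1 := by
    rw [hi', smul_mul_smul_comm, hu2, ← mul_inv, hs3]
    rw [show (-3 : ℍ[ℝ]) = ((-3 : ℝ) : ℍ[ℝ]) by norm_cast]
    rw [Quaternion.smul_coe]
    norm_num
  -- a quaternionic basis built from ω and φ
  have hji : φ * i' = -(i' * φ) := by
    rw [hi', mul_smul_comm, smul_mul_assoc, hanti, smul_neg]
  let qb : QuaternionAlgebra.Basis ℍ[ℝ] (-1 : ℝ) (0 : ℝ) (-1 : ℝ) :=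
    { i := i', j := φ, k := i' * φ
      i_mul_i := by rw [hi2]; simp
      j_mul_j := by rw [hφ']; simp
      i_mul_j := rfl
      j_mul_i := by simp [hji] }
  let ψ : ℍ[ℝ] →ₐ[ℝ] ℍ[ℝ] := qb.liftHom
  have hψinj : Function.Injective ψ := ψ.toRingHom.injective
  have hψsurj : Function.Surjective ψ := by
    have := LinearMap.injective_iff_surjective (f := ψ.toLinearMap)
    exact this.mp hψinj
  set A : Subalgebra ℝ ℍ[ℝ] := Algebra.adjoin ℝ ({ω, φ} : Set ℍ[ℝ]) with hA
  have hωA : ω ∈ A := Algebra.subset_adjoin (by simp)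
  have hφA : φ ∈ A := Algebra.subset_adjoin (by simp)
  have huA : u ∈ A := by
    rw [hu]
    exact add_mem (one_mem A) (mul_mem (by simpa using A.natCast_mem 2) hωA)
  have hiA : i' ∈ A := by rw [hi']; exact A.smul_mem huA _
  have hAtop : A = ⊤ := by
    rw [eq_top_iff]
    intro x _
    obtain ⟨y, rfl⟩ := hψsurj x
    show qb.lift y ∈ A
    unfold QuaternionAlgebra.Basis.lift
    refine add_mem (add_mem (add_mem ?_ ?_) ?_) ?_
    · exact A.algebraMap_mem _
    · exact A.smul_mem hiA _
    · exact A.smul_mem hφA _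
    · exact A.smul_mem (mul_mem hiA hφA) _
  -- the embedding of ℂ in ℍ via φ
  set c : ℂ →ₐ[ℝ] ℍ[ℝ] := Complex.liftAux φ hφ' with hc
  -- the algebra hom Φ : ℂ × ℍ → M₂(ℍ), (z, q) ↦ diag(q, c z)
  set fh : Fin 2 → ((ℂ × ℍ[ℝ]) →ₐ[ℝ] ℍ[ℝ]) :=
    ![AlgHom.snd ℝ ℂ ℍ[ℝ], c.comp (AlgHom.fst ℝ ℂ ℍ[ℝ])] with hfh
  set Φ : (ℂ × ℍ[ℝ]) →ₐ[ℝ] Matrix (Fin 2) (Fin 2) ℍ[ℝ] :=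
    (Matrix.diagonalAlgHom ℝ).comp (Pi.algHom ℝ _ fh) with hΦdef
  have hΦ : ∀ x : ℂ × ℍ[ℝ], Φ x = Matrix.diagonal ![x.2, c x.1] := by
    intro x
    show Matrix.diagonal _ = _
    congr 1
    funext i
    fin_cases i <;> rfl
  have hΦinj : Function.Injective Φ := by
    intro x y hxy
    rw [hΦ, hΦ] at hxy
    have h2 : x.2 = y.2 := by
      have := congrFun (congrFun hxy 0) 0
      simpa using this
    have h1 : c x.1 = c y.1 := by
      have := congrFun (congrFun hxy 1) 1
      simpa using this
    have h1' : x.1 = y.1 := c.toRingHom.injective h1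
    exact Prod.ext h1' h2
  set T : Subalgebra ℝ (Matrix (Fin 2) (Fin 2) ℍ[ℝ]) :=
    Algebra.adjoin ℝ ({g, h} : Set (Matrix (Fin 2) (Fin 2) ℍ[ℝ])) with hT
  have hgT : g ∈ T := Algebra.subset_adjoin (by simp)
  have hhT : h ∈ T := Algebra.subset_adjoin (by simp)
  -- the idempotent diag(0,1)
  have hgg : g * g = !![ω * ω, 0; 0, 1] := by
    rw [hg]
    simp [Matrix.mul_fin_two]
  have hsum : g * g + g + 1 = !![0, 0; 0, 3] := by
    rw [hgg, hg, Matrix.one_fin_two]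
    apply Matrix.ext
    intro i j
    fin_cases i <;> fin_cases j <;> simp [hω2] <;> first | norm_num | abel
  have he : (3:ℝ)⁻¹ • (g * g + g + 1) = Matrix.diagonal ![0, 1] := by
    rw [hsum, diag_eq_matrix]
    apply Matrix.ext
    intro i j
    fin_cases i <;> fin_cases j <;> simp
    rw [show (3 : ℍ[ℝ]) = ((3 : ℝ) : ℍ[ℝ]) by norm_cast, Quaternion.smul_coe]
    norm_num
  have heT : Matrix.diagonal ![(0:ℍ[ℝ]), 1] ∈ T := by
    rw [← he]
    exact T.smul_mem (add_mem (add_mem (mul_mem hgT hgT) hgT) (one_mem T)) _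
  have hone : Matrix.diagonal ![(1:ℍ[ℝ]), 0] = 1 - Matrix.diagonal ![(0:ℍ[ℝ]), 1] := by
    apply Matrix.ext
    intro i j
    fin_cases i <;> fin_cases j <;> simp [Matrix.diagonal, Matrix.one_apply]
  have hfT : Matrix.diagonal ![(1:ℍ[ℝ]), 0] ∈ T := by
    rw [hone]; exact sub_mem (one_mem T) heT
  have hgd : g = Matrix.diagonal ![ω, 1] := by rw [diag_eq_matrix, hg]
  have hhd : h = Matrix.diagonal ![φ, φ] := by rw [diag_eq_matrix, hh]
  have hdiagmul : ∀ a b a' b' : ℍ[ℝ],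
      Matrix.diagonal ![a, b] * Matrix.diagonal ![a', b'] = Matrix.diagonal ![a * a', b * b'] := by
    intro a b a' b'
    rw [Matrix.diagonal_mul_diagonal]
    congr 1
    funext i
    fin_cases i <;> rfl
  have hdiagadd : ∀ a b a' b' : ℍ[ℝ],
      Matrix.diagonal ![a, b] + Matrix.diagonal ![a', b'] = Matrix.diagonal ![a + a', b + b'] := by
    intro a b a' b'
    rw [Matrix.diagonal_add]
    congr 1
    funext i
    fin_cases i <;> rfl
  have hdiagsmul : ∀ (r : ℝ) (a b : ℍ[ℝ]),
      r • Matrix.diagonal ![a, b] = Matrix.diagonal ![r • a, r • b] := by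
    intro r a b
    rw [← Matrix.diagonal_smul]
    congr 1
    funext i
    fin_cases i <;> rfl
  -- the subalgebra of q with diag(q,0) ∈ T
  let B : Subalgebra ℝ ℍ[ℝ] :=
    { carrier := {q | Matrix.diagonal ![q, 0] ∈ T}
      mul_mem' := fun {a b} ha hb => by
        have ha' : Matrix.diagonal ![a, 0] ∈ T := ha
        have hb' : Matrix.diagonal ![b, 0] ∈ T := hb
        have := mul_mem ha' hb'
        rwa [hdiagmul, mul_zero] at this
      add_mem' := fun {a b} ha hb => by
        have ha' : Matrix.diagonal ![a, 0] ∈ T := ha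
        have hb' : Matrix.diagonal ![b, 0] ∈ T := hb
        have := add_mem ha' hb'
        rwa [hdiagadd, add_zero] at this
      one_mem' := hfT
      zero_mem' := by
        show Matrix.diagonal ![(0:ℍ[ℝ]), 0] ∈ T
        have hz : Matrix.diagonal ![(0:ℍ[ℝ]), 0] = 0 := by
          apply Matrix.ext
          intro i j
          fin_cases i <;> fin_cases j <;> simp
        rw [hz]
        exact zero_mem T
      algebraMap_mem' := fun r => by
        show Matrix.diagonal ![algebraMap ℝ ℍ[ℝ] r, 0] ∈ T
        have : Matrix.diagonal ![algebraMap ℝ ℍ[ℝ] r, 0] =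
            r • Matrix.diagonal ![(1:ℍ[ℝ]), 0] := by
          rw [hdiagsmul]
          congr 1
          funext i
          fin_cases i <;> simp [Algebra.algebraMap_eq_smul_one]
        rw [this]
        exact T.smul_mem hfT _ }
  have hωB : ω ∈ B := by
    show Matrix.diagonal ![ω, 0] ∈ T
    have := mul_mem hgT hfT
    rwa [hgd, hdiagmul, mul_one, one_mul] at this
  have hφB : φ ∈ B := by
    show Matrix.diagonal ![φ, 0] ∈ T
    have := mul_mem hhT hfT
    rwa [hhd, hdiagmul, mul_one, mul_zero] at this
  have hB : ∀ q : ℍ[ℝ], Matrix.diagonal ![q, 0] ∈ T := by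
    intro q
    have hle : A ≤ B := Algebra.adjoin_le (by
      rintro x hx
      rcases hx with rfl | hx
      · exact hωB
      · rcases hx with rfl
        exact hφB)
    have : q ∈ A := by rw [hAtop]; trivial
    exact hle this
  have hdφT : Matrix.diagonal ![(0:ℍ[ℝ]), φ] ∈ T := by
    have := mul_mem hhT heT
    rwa [hhd, hdiagmul, mul_zero, mul_one] at this
  -- T is the range of Φ
  have hrange : Φ.range = T := by
    apply le_antisymm
    · rintro x ⟨⟨z, q⟩, rfl⟩
      show Φ (z, q) ∈ T
      rw [hΦ (z, q)]
      show Matrix.diagonal ![q, c z] ∈ T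
      have hcz : c z = algebraMap ℝ ℍ[ℝ] z.re + z.im • φ := Complex.liftAux_apply φ hφ' z
      have hdec : Matrix.diagonal ![q, c z] = Matrix.diagonal ![q, 0]
          + z.re • Matrix.diagonal ![(0:ℍ[ℝ]), 1] + z.im • Matrix.diagonal ![(0:ℍ[ℝ]), φ] := by
        rw [hdiagsmul, hdiagsmul, hdiagadd, hdiagadd]
        congr 1
        funext i
        fin_cases i <;> simp [hcz, Algebra.algebraMap_eq_smul_one]
      rw [hdec]
      exact add_mem (add_mem (hB q) (T.smul_mem heT _)) (T.smul_mem hdφT _)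
    · have hgR : g ∈ Φ.range := ⟨(1, ω), by
        show Φ (1, ω) = g
        rw [hΦ (1, ω), hgd]
        simp⟩
      have hhR : h ∈ Φ.range := ⟨(Complex.I, φ), by
        show Φ (Complex.I, φ) = h
        rw [hΦ (Complex.I, φ), hhd]
        have hci : c Complex.I = φ := Complex.liftAux_apply_I φ hφ'
        rw [hci]⟩
      rw [hT]
      apply Algebra.adjoin_le
      rintro x hx
      rcases hx with rfl | hx
      · exact hgR
      · rcases hx with rfl
        exact hhR
  -- conclusion
  have equiv : (ℂ × ℍ[ℝ]) ≃ₐ[ℝ] Φ.range := AlgEquiv.ofInjective Φ hΦinj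
  rw [← hrange]
  constructor
  · rw [← equiv.toLinearEquiv.finrank_eq]
    rw [Module.finrank_prod, Complex.finrank_real_complex, Quaternion.finrank_eq_four]
  · exact ⟨equiv.symm⟩
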